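/- Let Ψ(w) = wᵀRw − wᵀμ̂ + Σ_i β_i|w_i| with R symmetric positive definite and β_i ≥ 0. If x ∈ ℝ^N satisfies x_i = 0 and |(2Rx)_i − μ̂_i| > β_i for some index i, then x is not a minimizer of Ψ: there exists w with w_j = x_j for j ≠ i, w_i ≠ 0, and Ψ(w) < Ψ(x). -/

import Mathlib

open Matrix BigOperators

/-- If `x_i = 0` and `|(2Rx)_i − μ̂_i| > β_i` for some `i`, then
`x` is not a minimizer of `Ψ`: the objective can be decreased by making the
`i`-th weight nonzero. -/
theorem stmt12 (N : ℕ) (R : Matrix (Fin N) (Fin N) ℝ) (μ β : Fin N → ℝ)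
    (hR : R.PosDef) (hβ : ∀ i, 0 ≤ β i)
    (Ψ : (Fin N → ℝ) → ℝ)
    (hΨ : ∀ w, Ψ w = w ⬝ᵥ (R *ᵥ w) - w ⬝ᵥ μ + ∑ i, β i * |w i|)
    (x : Fin N → ℝ) (i : Fin N)
    (hx : x i = 0) (hgrad : β i < |2 * (R *ᵥ x) i - μ i|) :
    ∃ w : Fin N → ℝ, (∀ j, j ≠ i → w j = x j) ∧ w i ≠ 0 ∧ Ψ w < Ψ x := by
  set g : ℝ := 2 * (R *ᵥ x) i - μ i with hgdef
  have hsym : ∀ a b, R a b = R b a := by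
    intro a b
    have := hR.1
    rw [Matrix.IsHermitian] at this
    conv_lhs => rw [← this]
    simp [Matrix.conjTranspose_apply]
  have hRii : 0 < R i i := by
    have h := hR.dotProduct_mulVec_pos (x := Pi.single i 1) (by
      intro h
      have := congrFun h i
      simp at this)
    simpa [dotProduct, Matrix.mulVec, Finset.sum_ite_eq', Pi.single_apply,
      mul_comm] using h
  set c : ℝ := |g| - β i with hcdef
  have hc : 0 < c := by simp [hcdef]; linarith
  set ε : ℝ := c / (2 * R i i) with hεdef
  have hε : 0 < ε := div_pos hc (by linarith)
  set t : ℝ := if 0 ≤ g then -ε else ε with htdef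
  have ht0 : t ≠ 0 := by
    rcases le_or_gt 0 g with h | h
    · simp only [htdef, if_pos h]; exact neg_ne_zero.mpr (ne_of_gt hε)
    · simp only [htdef, if_neg (not_le.mpr h)]; exact ne_of_gt hε
  have habs : |t| = ε := by
    rcases le_or_gt 0 g with h | h
    · simp only [htdef, if_pos h, abs_neg]; exact abs_of_pos hε
    · simp only [htdef, if_neg (not_le.mpr h)]; exact abs_of_pos hε
  have htg : t * g = -(ε * |g|) := by
    rcases le_or_gt 0 g with h | h
    · simp only [htdef, if_pos h, abs_of_nonneg h]; ring
    · simp only [htdef, if_neg (not_le.mpr h), abs_of_neg h]; ring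
  refine ⟨x + Pi.single i t, ?_, ?_, ?_⟩
  · intro j hj; simp [Pi.single_apply, hj]
  · simp [hx, ht0]
  · set w : Fin N → ℝ := x + Pi.single i t with hwdef
    have hquad : w ⬝ᵥ (R *ᵥ w) = x ⬝ᵥ (R *ᵥ x) + 2 * t * (R *ᵥ x) i + t * (R i i * t) := by
      have h1 : Pi.single i t ⬝ᵥ (R *ᵥ x) = t * (R *ᵥ x) i := by
        simp [dotProduct, Pi.single_apply, Finset.sum_ite_eq']
      have h2 : x ⬝ᵥ (R *ᵥ Pi.single i t) = t * (R *ᵥ x) i := by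
        simp only [dotProduct, Matrix.mulVec, Pi.single_apply, mul_ite, mul_zero,
          Finset.sum_ite_eq', Finset.mem_univ, if_true, Matrix.mulVec]
        rw [Finset.mul_sum]
        exact Finset.sum_congr rfl fun j _ => by rw [hsym j i]; ring
      have h3 : Pi.single i t ⬝ᵥ (R *ᵥ Pi.single i t) = t * (R i i * t) := by
        simp [dotProduct, Matrix.mulVec, Pi.single_apply, Finset.sum_ite_eq',
          mul_ite]
      rw [hwdef, Matrix.mulVec_add, dotProduct_add, add_dotProduct,
        add_dotProduct, h1, h2, h3]
      ring
    have hlin : w ⬝ᵥ μ = x ⬝ᵥ μ + t * μ i := by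
      rw [hwdef, add_dotProduct]
      simp [dotProduct, Pi.single_apply, Finset.sum_ite_eq']
    have habs_sum : ∑ j, β j * |w j| = (∑ j, β j * |x j|) + β i * |t| := by
      have : ∀ j, β j * |w j| = β j * |x j| + (if j = i then β i * |t| else 0) := by
        intro j
        by_cases hj : j = i
        · subst hj; simp [hwdef, hx, Pi.single_apply]
        · simp [hwdef, Pi.single_apply, hj]
      simp_rw [this, Finset.sum_add_distrib, Finset.sum_ite_eq', Finset.mem_univ, if_true]
    rw [hΨ, hΨ, hquad, hlin, habs_sum]
    have key : 2 * t * (R *ᵥ x) i + t * (R i i * t) - t * μ i + β i * |t| < 0 := by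
      have htgeq : t * g = t * (2 * (R *ᵥ x) i) - t * μ i := by rw [hgdef]; ring
      have hsq : t * (R i i * t) = R i i * ε ^ 2 := by
        have : t ^ 2 = ε ^ 2 := by rw [← sq_abs t, habs]
        nlinarith [this]
      rw [habs]
      have h2 : t * (2 * (R *ᵥ x) i) - t * μ i = -(ε * |g|) := by rw [← htgeq, htg]
      have hεeq : 2 * R i i * ε = c := by
        rw [hεdef]; field_simp
      nlinarith [hεeq, hc, hε, hRii]
    linarith
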